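/- Let d < n. The map N on triangular GT patterns with top row (n,…,n,0,…,0) (d copies of n) and constant weight vector (d,…,d), defined by (N(λ))_{i,j} = λ_{n−i, d+j−i} when j ≤ i ≤ d+j−1 and j ≤ n−d, (N(λ))_{i,j} = 0 when j > n−d, and (N(λ))_{i,j} = n when i > d+j−1 and j ≤ n−d, produces a valid GT pattern with top row consisting of n−d copies of n followed by zeros and constant weight vector (n−d,…,n−d). Moreover N_{n,n−d} ∘ N_{n,d} is the identity. -/

import Mathlib

/-- `L` is an integer triangular Gelfand-Tsetlin pattern of size `n`
(zero outside the triangle `1 ≤ j ≤ i ≤ n`). -/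
def IsGTPattern (n : ℕ) (L : ℕ → ℕ → ℕ) : Prop :=
  (∀ i j, 1 ≤ j → j + 1 ≤ i → i ≤ n → L i (j + 1) ≤ L i j) ∧
  (∀ i j, 1 ≤ j → j ≤ i → i + 1 ≤ n →
    L i j ≤ L (i + 1) j ∧ L (i + 1) (j + 1) ≤ L i j) ∧
  (∀ i j, ¬(1 ≤ j ∧ j ≤ i ∧ i ≤ n) → L i j = 0)

/-- The `i`-th row sum of a GT pattern. -/
def gtRowSum (L : ℕ → ℕ → ℕ) (i : ℕ) : ℕ :=
  ∑ j ∈ Finset.Icc 1 i, L i j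

/-- Membership in `Λ_{n,d}`: a triangular GT pattern of size `n` with top row
`(n,…,n,0,…,0)` (`d` copies of `n`) and constant weight vector `(d,…,d)`. -/
def MemLambda (n d : ℕ) (L : ℕ → ℕ → ℕ) : Prop :=
  IsGTPattern n L ∧
  (∀ j, 1 ≤ j → j ≤ d → L n j = n) ∧
  (∀ j, d < j → j ≤ n → L n j = 0) ∧
  (∀ i, 1 ≤ i → i ≤ n → gtRowSum L i = d * i)

/-- The Naimark map `N_{n,d}` on GT patterns. -/
def naimarkMap (n d : ℕ) (L : ℕ → ℕ → ℕ) : ℕ → ℕ → ℕ := fun i j =>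
  if 1 ≤ j ∧ j ≤ i ∧ i ≤ n then
    (if n - d < j then 0
     else if d + j - 1 < i then n
     else L (n - i) (d + j - i))
  else 0

section Aux

variable {n d : ℕ} {L : ℕ → ℕ → ℕ}

/-- Rows of a GT pattern are weakly decreasing. -/
lemma gt_row_anti (h : IsGTPattern n L) {i j k : ℕ} (h1 : 1 ≤ j) (h2 : j ≤ k) (h3 : k ≤ i)
    (h4 : i ≤ n) : L i k ≤ L i j := by
  obtain ⟨e, rfl⟩ := Nat.exists_eq_add_of_le h2
  clear h2
  induction e with
  | zero => exact le_refl _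
  | succ e ih =>
    calc L i (j + (e + 1)) ≤ L i (j + e) := h.1 i (j + e) (by omega) (by omega) h4
    _ ≤ L i j := ih (by omega)

/-- Going up vertically a GT pattern entries increase. -/
lemma gt_le_up (h : IsGTPattern n L) (m : ℕ) {i j : ℕ} (h1 : 1 ≤ j) (h2 : j ≤ i)
    (h3 : i + m ≤ n) : L i j ≤ L (i + m) j := by
  induction m with
  | zero => exact le_refl _
  | succ m ih =>
    calc L i j ≤ L (i + m) j := ih (by omega)
    _ ≤ L (i + m + 1) j := (h.2.1 (i + m) j h1 (by omega) (by omega)).1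

/-- Going up diagonally GT pattern entries decrease. -/
lemma gt_diag (h : IsGTPattern n L) (m : ℕ) {i j : ℕ} (h1 : 1 ≤ j) (h2 : j ≤ i)
    (h3 : i + m ≤ n) : L (i + m) (j + m) ≤ L i j := by
  induction m with
  | zero => exact le_refl _
  | succ m ih =>
    calc L (i + (m + 1)) (j + (m + 1)) = L ((i + m) + 1) ((j + m) + 1) := by ring_nf
    _ ≤ L (i + m) (j + m) := (h.2.1 (i + m) (j + m) (by omega) (by omega) (by omega)).2
    _ ≤ L i j := ih (by omega)

lemma entry_le (hL : MemLambda n d L) {i j : ℕ} (h1 : 1 ≤ j) (h2 : j ≤ i) (h3 : i ≤ n) :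
    L i j ≤ n := by
  have h4 : L i j ≤ L n j := by
    have := gt_le_up hL.1 (n - i) h1 h2 (by omega)
    rwa [Nat.add_sub_cancel' h3] at this
  refine h4.trans ?_
  by_cases hjd : j ≤ d
  · rw [hL.2.1 j h1 hjd]
  · rw [hL.2.2.1 j (by omega) (by omega)]
    exact Nat.zero_le _

lemma entry_eq_n (hL : MemLambda n d L) {i j : ℕ} (h1 : 1 ≤ j) (h2 : j + n ≤ d + i)
    (h3 : j ≤ i) (h4 : i ≤ n) : L i j = n := by
  refine le_antisymm (entry_le hL h1 h3 h4) ?_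
  have := gt_diag hL.1 (n - i) h1 h3 (by omega)
  rw [Nat.add_sub_cancel' h4, hL.2.1 (j + (n - i)) (by omega) (by omega)] at this
  exact this

lemma entry_eq_zero (hL : MemLambda n d L) {i j : ℕ} (h1 : d < j) (h3 : j ≤ i) (h4 : i ≤ n) :
    L i j = 0 := by
  have h5 : L i j ≤ L n j := by
    have := gt_le_up hL.1 (n - i) (by omega) h3 (by omega)
    rwa [Nat.add_sub_cancel' h4] at this
  rw [hL.2.2.1 j h1 (by omega)] at h5
  omega

/-- The row sums of the Naimark image. -/
lemma naimark_rowsum (hd : d < n) (hL : MemLambda n d L) {i : ℕ} (hi1 : 1 ≤ i) (hi2 : i ≤ n) :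
    gtRowSum (naimarkMap n d L) i = (n - d) * i := by
  have key : ∀ j ∈ Finset.Ioc 0 i, naimarkMap n d L i j =
      if j ≤ i - d then n else if j ≤ min i (n - d) then L (n - i) (d + j - i) else 0 := by
    intro j hj
    simp only [Finset.mem_Ioc] at hj
    simp only [naimarkMap]
    rw [if_pos (show 1 ≤ j ∧ j ≤ i ∧ i ≤ n by omega)]
    by_cases c1 : j ≤ i - d
    · rw [if_pos c1, if_neg (show ¬ n - d < j by omega), if_pos (show d + j - 1 < i by omega)]
    · rw [if_neg c1]
      by_cases c2 : j ≤ min i (n - d)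
      · rw [if_pos c2, if_neg (show ¬ n - d < j by omega), if_neg (show ¬ d + j - 1 < i by omega)]
      · rw [if_neg c2, if_pos (show n - d < j by omega)]
  have hIcc : Finset.Icc 1 i = Finset.Ioc 0 i := Finset.Icc_add_one_left_eq_Ioc 0 i
  rw [gtRowSum, hIcc, Finset.sum_congr rfl key]
  set f : ℕ → ℕ := fun j =>
    if j ≤ i - d then n else if j ≤ min i (n - d) then L (n - i) (d + j - i) else 0 with hf
  rw [← Finset.sum_Ioc_consecutive f (Nat.zero_le (i - d)) (show i - d ≤ i by omega),
      ← Finset.sum_Ioc_consecutive f (show i - d ≤ min i (n - d) by omega)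
        (show min i (n - d) ≤ i by omega)]
  have s1 : ∑ j ∈ Finset.Ioc 0 (i - d), f j = n * (i - d) := by
    have hc : ∀ j ∈ Finset.Ioc 0 (i - d), f j = n := by
      intro j hj
      simp only [Finset.mem_Ioc] at hj
      simp only [hf]
      rw [if_pos hj.2]
    rw [Finset.sum_congr rfl hc, Finset.sum_const, Nat.card_Ioc, smul_eq_mul, Nat.sub_zero,
      mul_comm]
  have s3 : ∑ j ∈ Finset.Ioc (min i (n - d)) i, f j = 0 := by
    refine Finset.sum_eq_zero fun j hj => ?_
    simp only [Finset.mem_Ioc] at hj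
    rw [hf]
    simp only
    rw [if_neg (show ¬ j ≤ i - d by omega), if_neg (show ¬ j ≤ min i (n - d) by omega)]
  have s2 : ∑ j ∈ Finset.Ioc (i - d) (min i (n - d)), f j =
      ∑ k ∈ Finset.Ioc (d - i) (d + min i (n - d) - i), L (n - i) k := by
    refine Finset.sum_bij' (fun j _ => d + j - i) (fun k _ => i + k - d) ?_ ?_ ?_ ?_ ?_
    · intro a ha
      simp only [Finset.mem_Ioc] at ha ⊢
      omega
    · intro a ha
      simp only [Finset.mem_Ioc] at ha ⊢
      omega
    · intro a ha
      simp only [Finset.mem_Ioc] at ha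
      show i + (d + a - i) - d = a
      omega
    · intro a ha
      simp only [Finset.mem_Ioc] at ha
      show d + (i + a - d) - i = a
      omega
    · intro a ha
      simp only [Finset.mem_Ioc] at ha
      show f a = L (n - i) (d + a - i)
      simp only [hf]
      rw [if_neg (show ¬ a ≤ i - d by omega), if_pos (show a ≤ min i (n - d) by omega)]
  rw [s1, s2, s3]
  -- Now relate the middle sum to the row sum of `L` at row `n - i`.
  set S := ∑ k ∈ Finset.Ioc (d - i) (d + min i (n - d) - i), L (n - i) k with hS
  have hrow : ∑ k ∈ Finset.Ioc 0 (n - i), L (n - i) k = d * (n - i) := by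
    rcases Nat.eq_zero_or_pos (n - i) with h0 | h0
    · rw [h0]
      simp
    · have := hL.2.2.2 (n - i) h0 (by omega)
      rwa [gtRowSum, (show Finset.Icc 1 (n - i) = Finset.Ioc 0 (n - i) from Finset.Icc_add_one_left_eq_Ioc 0 (n - i))] at this
  have p1 : ∑ k ∈ Finset.Ioc 0 (d - i), L (n - i) k = n * (d - i) := by
    have hc : ∀ k ∈ Finset.Ioc 0 (d - i), L (n - i) k = n := by
      intro k hk
      simp only [Finset.mem_Ioc] at hk
      exact entry_eq_n hL (by omega) (by omega) (by omega) (by omega)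
    rw [Finset.sum_congr rfl hc, Finset.sum_const, Nat.card_Ioc, smul_eq_mul, Nat.sub_zero,
      mul_comm]
  have p3 : ∑ k ∈ Finset.Ioc (d + min i (n - d) - i) (n - i), L (n - i) k = 0 := by
    refine Finset.sum_eq_zero fun k hk => ?_
    simp only [Finset.mem_Ioc] at hk
    exact entry_eq_zero hL (by omega) (by omega) (by omega)
  have E : n * (d - i) + S = d * (n - i) := by
    rw [hS, ← hrow,
      ← Finset.sum_Ioc_consecutive (fun k => L (n - i) k) (Nat.zero_le (d - i))
        (show d - i ≤ n - i by omega),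
      ← Finset.sum_Ioc_consecutive (fun k => L (n - i) k)
        (show d - i ≤ d + min i (n - d) - i by omega)
        (show d + min i (n - d) - i ≤ n - i by omega), ← p1, p3]
    omega
  rcases le_total i d with h | h
  · rw [Nat.sub_eq_zero_of_le h]
    zify [h, hi2, hd.le] at E ⊢
    linear_combination E
  · rw [Nat.sub_eq_zero_of_le h] at E
    zify [h, hi2, hd.le] at E ⊢
    linear_combination E

lemma naimark_mem (hd : d < n) (hL : MemLambda n d L) :
    MemLambda n (n - d) (naimarkMap n d L) := by
  refine ⟨⟨?_, ?_, ?_⟩, ?_, ?_, fun i hi1 hi2 => naimark_rowsum hd hL hi1 hi2⟩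
  · -- rows weakly decreasing
    intro i j h1 h2 h3
    simp only [naimarkMap]
    rw [if_pos (show 1 ≤ j + 1 ∧ j + 1 ≤ i ∧ i ≤ n by omega),
      if_pos (show 1 ≤ j ∧ j ≤ i ∧ i ≤ n by omega)]
    by_cases hz : n - d < j + 1
    · rw [if_pos hz]
      exact Nat.zero_le _
    · rw [if_neg hz, if_neg (show ¬ n - d < j by omega)]
      by_cases hn : d + j - 1 < i
      · rw [if_pos hn]
        by_cases h2' : d + (j + 1) - 1 < i
        · rw [if_pos h2']
        · rw [if_neg h2']
          exact entry_le hL (by omega) (by omega) (by omega)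
      · rw [if_neg hn, if_neg (show ¬ d + (j + 1) - 1 < i by omega)]
        exact gt_row_anti hL.1 (show 1 ≤ d + j - i by omega)
          (show d + j - i ≤ d + (j + 1) - i by omega) (show d + (j + 1) - i ≤ n - i by omega)
          (show n - i ≤ n by omega)
  · -- interlacing
    intro i j h1 h2 h3
    simp only [naimarkMap]
    rw [if_pos (show 1 ≤ j ∧ j ≤ i ∧ i ≤ n by omega),
      if_pos (show 1 ≤ j ∧ j ≤ i + 1 ∧ i + 1 ≤ n by omega),
      if_pos (show 1 ≤ j + 1 ∧ j + 1 ≤ i + 1 ∧ i + 1 ≤ n by omega)]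
    constructor
    · by_cases hz : n - d < j
      · rw [if_pos hz, if_pos hz]
      · rw [if_neg hz, if_neg hz]
        by_cases c1 : d + j - 1 < i
        · rw [if_pos c1, if_pos (show d + j - 1 < i + 1 by omega)]
        · rw [if_neg c1]
          by_cases c2 : d + j - 1 < i + 1
          · rw [if_pos c2]
            exact entry_le hL (by omega) (by omega) (by omega)
          · rw [if_neg c2]
            have h := (hL.1.2.1 (n - (i + 1)) (d + j - (i + 1)) (by omega) (by omega)
              (by omega)).2
            rw [show n - (i + 1) + 1 = n - i by omega,
              show d + j - (i + 1) + 1 = d + j - i by omega] at h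
            exact h
    · by_cases hz : n - d < j + 1
      · rw [if_pos hz]
        exact Nat.zero_le _
      · rw [if_neg hz, if_neg (show ¬ n - d < j by omega)]
        by_cases c1 : d + (j + 1) - 1 < i + 1
        · rw [if_pos c1, if_pos (show d + j - 1 < i by omega)]
        · rw [if_neg c1, if_neg (show ¬ d + j - 1 < i by omega)]
          rw [show d + (j + 1) - (i + 1) = d + j - i by omega]
          have h := (hL.1.2.1 (n - (i + 1)) (d + j - i) (by omega) (by omega) (by omega)).1
          rw [show n - (i + 1) + 1 = n - i by omega] at h
          exact h
  · -- zero outside the triangle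
    intro i j h
    simp only [naimarkMap, if_neg h]
  · -- top row: first `n - d` entries equal `n`
    intro j h1 h2
    simp only [naimarkMap]
    rw [if_pos (show 1 ≤ j ∧ j ≤ n ∧ n ≤ n by omega), if_neg (show ¬ n - d < j by omega),
      if_pos (show d + j - 1 < n by omega)]
  · -- top row: remaining entries are zero
    intro j h1 h2
    simp only [naimarkMap]
    rw [if_pos (show 1 ≤ j ∧ j ≤ n ∧ n ≤ n by omega), if_pos (show n - d < j by omega)]

lemma naimark_inv (hd : d < n) (hL : MemLambda n d L) :
    naimarkMap n (n - d) (naimarkMap n d L) = L := by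
  funext i j
  by_cases ht : 1 ≤ j ∧ j ≤ i ∧ i ≤ n
  · obtain ⟨h1, h2, h3⟩ := ht
    conv_lhs => simp only [naimarkMap]
    rw [if_pos (show 1 ≤ j ∧ j ≤ i ∧ i ≤ n from ⟨h1, h2, h3⟩)]
    by_cases c1 : n - (n - d) < j
    · rw [if_pos c1, entry_eq_zero hL (by omega) h2 h3]
    · rw [if_neg c1]
      by_cases c2 : n - d + j - 1 < i
      · rw [if_pos c2, entry_eq_n hL h1 (by omega) h2 h3]
      · rw [if_neg c2,
          if_pos (show 1 ≤ n - d + j - i ∧ n - d + j - i ≤ n - i ∧ n - i ≤ n by omega),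
          if_neg (show ¬ n - d < n - d + j - i by omega),
          if_neg (show ¬ d + (n - d + j - i) - 1 < n - i by omega),
          show n - (n - i) = i by omega, show d + (n - d + j - i) - (n - i) = j by omega]
  · conv_lhs => simp only [naimarkMap]
    rw [if_neg ht, hL.1.2.2 i j ht]

end Aux

/-- The Naimark map sends `Λ_{n,d}` to `Λ_{n,n-d}`, and `N_{n,n-d} ∘ N_{n,d}` is the
identity. -/
theorem naimark_map_iso (n d : ℕ) (hd : d < n) (L : ℕ → ℕ → ℕ) (hL : MemLambda n d L) :
    MemLambda n (n - d) (naimarkMap n d L) ∧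
    naimarkMap n (n - d) (naimarkMap n d L) = L := by
  exact ⟨naimark_mem hd hL, naimark_inv hd hL⟩
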